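/- Let (X,d) be a nonempty metric space without isolated points and f : X → X a topologically transitive homeomorphism that is not minimal and such that the family {f^k : k ∈ ℤ} is equicontinuous at some point of X. Then the NADS f_{1,∞} defined by f_{4n−3} = f_{4n} = f^n and f_{4n−2} = f_{4n−1} = f^{−n} for each n ≥ 1 is not finitely generated, is topologically transitive, satisfies Per(f_{1,∞}) = X, admits two invariant periodic points x, y with orb(x, f_{1,∞}) ∩ orb(y, f_{1,∞}) = ∅, and is not sensitive. -/

import Mathlib

/-- `nadsComp F n = F_1^{(n)} = F_n ∘ F_{n-1} ∘ ⋯ ∘ F_1` for a 1-indexed sequence of maps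
(`F i` is the map `F_i`; the value of `F 0` is irrelevant). -/
def nadsComp {X : Type*} (F : ℕ → X → X) : ℕ → X → X
  | 0 => id
  | n + 1 => F (n + 1) ∘ nadsComp F n

/-- `F` is the sequence `f, f⁻¹, f⁻¹, f, f², f⁻², f⁻², f², …`, i.e.
`F_{4n-3} = F_{4n} = f^n` and `F_{4n-2} = F_{4n-1} = f^{-n}` for every `n ≥ 1`
(integer powers are taken in the group of bijections of `X`). -/
def IsExampleSeq {X : Type*} [TopologicalSpace X] (f : X ≃ₜ X) (F : ℕ → X → X) : Prop :=
  ∀ n : ℕ, 1 ≤ n →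
    F (4 * n - 3) = ⇑(f.toEquiv ^ (n : ℤ)) ∧
    F (4 * n - 2) = ⇑(f.toEquiv ^ (-(n : ℤ))) ∧
    F (4 * n - 1) = ⇑(f.toEquiv ^ (-(n : ℤ))) ∧
    F (4 * n) = ⇑(f.toEquiv ^ (n : ℤ))

private lemma nadsComp_succ {X : Type*} (F : ℕ → X → X) (n : ℕ) :
    nadsComp F (n + 1) = F (n + 1) ∘ nadsComp F n := rfl


open Function Set Metric in
/-- Example answering Open Problem 4.1 of Yang–Li: if `f` is a topologically transitive,
non-minimal homeomorphism of a nonempty metric space without isolated points such that the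
family `{f^k : k ∈ ℤ}` is equicontinuous at some point, then the NADS
`f, f⁻¹, f⁻¹, f, f², f⁻², f⁻², f², …` is not finitely generated, is topologically transitive,
has `Per = X`, admits two invariant periodic points with disjoint orbits, and is not
sensitive. -/
theorem example_seq_answers_open_problem {X : Type*} [MetricSpace X] [Nonempty X]
    (hX : ∀ x : X, Filter.NeBot (nhdsWithin x {x}ᶜ))
    (f : X ≃ₜ X)
    (htrans : ∀ U V : Set X, IsOpen U → IsOpen V → U.Nonempty → V.Nonempty →
      ∃ n : ℕ, ((⇑f)^[n] '' U ∩ V).Nonempty)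
    (hnotmin : ¬ ∀ x : X, Dense (Set.range fun n : ℕ => (⇑f)^[n] x))
    (heq : ∃ x₀ : X, ∀ ε : ℝ, 0 < ε → ∃ δ : ℝ, 0 < δ ∧ ∀ y : X, dist x₀ y < δ →
      ∀ k : ℤ, dist ((f.toEquiv ^ k) x₀) ((f.toEquiv ^ k) y) < ε)
    (F : ℕ → X → X) (hF : IsExampleSeq f F) :
    (¬ {g : X → X | ∃ i : ℕ, 1 ≤ i ∧ F i = g}.Finite) ∧
    (∀ U V : Set X, IsOpen U → IsOpen V → U.Nonempty → V.Nonempty →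
      ∃ n : ℕ, (nadsComp F n '' U ∩ V).Nonempty) ∧
    {x : X | ∃ m : ℕ, 1 ≤ m ∧ ∀ k : ℕ, nadsComp F (m * k) x = x} = Set.univ ∧
    (∃ x y : X,
      (∃ m : ℕ, 1 ≤ m ∧ ∀ k : ℕ, nadsComp F (m * k) x = x) ∧
      (∃ m : ℕ, 1 ≤ m ∧ ∀ k : ℕ, nadsComp F (m * k) y = y) ∧
      (∀ i : ℕ, 1 ≤ i → F i '' Set.range (fun n : ℕ => nadsComp F n x) ⊆
        Set.range (fun n : ℕ => nadsComp F n x)) ∧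
      (∀ i : ℕ, 1 ≤ i → F i '' Set.range (fun n : ℕ => nadsComp F n y) ⊆
        Set.range (fun n : ℕ => nadsComp F n y)) ∧
      Set.range (fun n : ℕ => nadsComp F n x) ∩ Set.range (fun n : ℕ => nadsComp F n y) = ∅) ∧
    ¬ ∃ ε : ℝ, 0 < ε ∧ ∀ x : X, ∀ δ : ℝ, 0 < δ →
      ∃ y : X, ∃ n : ℕ, dist x y < δ ∧ ε ≤ dist (nadsComp F n x) (nadsComp F n y) := by
  classical
  set e := f.toEquiv with he
  have hcoe : ∀ n : ℕ, ⇑(e ^ (n : ℤ)) = (⇑f)^[n] := by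
    intro n
    rw [zpow_natCast, Equiv.Perm.coe_pow, he, Homeomorph.coe_toEquiv]
  have hcoe' : ∀ m : ℕ, (⇑(e ^ ((m:ℤ)+1)) : X → X) = (⇑f)^[m+1] := by
    intro m
    rw [show ((m:ℤ)+1) = ((m+1 : ℕ) : ℤ) by push_cast; ring, hcoe]
  have hmul : ∀ a b : ℤ, (⇑(e ^ a) ∘ ⇑(e ^ b) : X → X) = ⇑(e ^ (a + b)) := by
    intro a b; rw [← Equiv.Perm.coe_mul, ← zpow_add]
  have happ : ∀ (a b : ℤ) (z : X), (e ^ a) ((e ^ b) z) = (e ^ (a + b)) z := by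
    intro a b z; rw [← Equiv.Perm.mul_apply, ← zpow_add]
  have hFblk : ∀ m : ℕ, F (4*m+1) = ⇑(e ^ ((m:ℤ)+1)) ∧ F (4*m+2) = ⇑(e ^ (-((m:ℤ)+1)))
      ∧ F (4*m+3) = ⇑(e ^ (-((m:ℤ)+1))) ∧ F (4*m+4) = ⇑(e ^ ((m:ℤ)+1)) := by
    intro m
    obtain ⟨h1, h2, h3, h4⟩ := hF (m+1) (by omega)
    have e1 : 4*(m+1)-3 = 4*m+1 := by omega
    have e2 : 4*(m+1)-2 = 4*m+2 := by omega
    have e3 : 4*(m+1)-1 = 4*m+3 := by omega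
    have e4 : 4*(m+1) = 4*m+4 := by omega
    have ec : ((m+1 : ℕ) : ℤ) = (m:ℤ)+1 := by push_cast; ring
    rw [e1, ec] at h1; rw [e2, ec] at h2; rw [e3, ec] at h3; rw [e4, ec] at h4
    exact ⟨h1, h2, h3, h4⟩
  have step : ∀ m : ℕ, nadsComp F (4*m) = id →
      nadsComp F (4*m+1) = ⇑(e ^ ((m:ℤ)+1)) ∧ nadsComp F (4*m+2) = id ∧
      nadsComp F (4*m+3) = ⇑(e ^ (-((m:ℤ)+1))) ∧ nadsComp F (4*m+4) = id := by
    intro m h0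
    obtain ⟨h1, h2, h3, h4⟩ := hFblk m
    have c1 : nadsComp F (4*m+1) = ⇑(e ^ ((m:ℤ)+1)) := by
      rw [nadsComp_succ, h0, h1, comp_id]
    have c2 : nadsComp F (4*m+2) = id := by
      have j : 4*m+2 = (4*m+1)+1 := by omega
      rw [j, nadsComp_succ, ← j, c1, h2, hmul]
      have : -((m:ℤ)+1) + ((m:ℤ)+1) = 0 := by ring
      rw [this, zpow_zero]; rfl
    have c3 : nadsComp F (4*m+3) = ⇑(e ^ (-((m:ℤ)+1))) := by
      have j : 4*m+3 = (4*m+2)+1 := by omega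
      rw [j, nadsComp_succ, ← j, c2, h3, comp_id]
    have c4 : nadsComp F (4*m+4) = id := by
      have j : 4*m+4 = (4*m+3)+1 := by omega
      rw [j, nadsComp_succ, ← j, c3, h4, hmul]
      have : (m:ℤ)+1 + -((m:ℤ)+1) = 0 := by ring
      rw [this, zpow_zero]; rfl
    exact ⟨c1, c2, c3, c4⟩
  have hid : ∀ m : ℕ, nadsComp F (4*m) = id := by
    intro m
    induction m with
    | zero => rfl
    | succ m ih =>
      have j : 4*(m+1) = 4*m+4 := by omega
      rw [j]; exact (step m ih).2.2.2
  have keyn := fun m => step m (hid m)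
  -- every nadsComp is an integer power of f
  have hpow : ∀ n : ℕ, ∃ k : ℤ, nadsComp F n = ⇑(e ^ k) := by
    intro n
    obtain ⟨m, r, hr, rfl⟩ : ∃ m r, r < 4 ∧ n = 4*m + r :=
      ⟨n/4, n%4, Nat.mod_lt _ (by norm_num), by omega⟩
    interval_cases r
    · exact ⟨0, by rw [zpow_zero, show 4*m+0 = 4*m by omega, hid m]; rfl⟩
    · exact ⟨(m:ℤ)+1, (keyn m).1⟩
    · exact ⟨0, by rw [zpow_zero, (keyn m).2.1]; rfl⟩
    · exact ⟨-((m:ℤ)+1), (keyn m).2.2.1⟩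
  -- every integer power of f is some nadsComp
  have hsurj : ∀ k : ℤ, ∃ n : ℕ, nadsComp F n = ⇑(e ^ k) := by
    intro k
    rcases k with n | n
    · cases n with
      | zero => exact ⟨0, by rw [show ((Int.ofNat 0) : ℤ) = 0 from rfl, zpow_zero]; rfl⟩
      | succ m =>
        refine ⟨4*m+1, ?_⟩
        rw [(keyn m).1]
        congr 1
    · refine ⟨4*n+3, ?_⟩
      rw [Int.negSucc_eq]
      exact (keyn n).2.2.1
  -- every F i (i ≥ 1) is an integer power of f
  have hFpow : ∀ i : ℕ, 1 ≤ i → ∃ k : ℤ, F i = ⇑(e ^ k) := by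
    intro i hi
    obtain ⟨m, hm⟩ : ∃ m, i = 4*m+1 ∨ i = 4*m+2 ∨ i = 4*m+3 ∨ i = 4*m+4 :=
      ⟨(i-1)/4, by omega⟩
    rcases hm with h | h | h | h
    · exact ⟨(m:ℤ)+1, h ▸ (hFblk m).1⟩
    · exact ⟨-((m:ℤ)+1), h ▸ (hFblk m).2.1⟩
    · exact ⟨-((m:ℤ)+1), h ▸ (hFblk m).2.2.1⟩
    · exact ⟨(m:ℤ)+1, h ▸ (hFblk m).2.2.2⟩
  obtain ⟨x₀, hx₀⟩ := heq
  -- PART A: not finitely generated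
  have partA : ¬ {g : X → X | ∃ i : ℕ, 1 ≤ i ∧ F i = g}.Finite := by
    intro hfin
    have hmem : ∀ m : ℕ, (⇑(e ^ ((m:ℤ)+1)) : X → X) ∈ {g : X → X | ∃ i, 1 ≤ i ∧ F i = g} :=
      fun m => ⟨4*m+1, by omega, (hFblk m).1⟩
    obtain ⟨a, -, b, -, hab, habe⟩ :=
      Set.infinite_univ.exists_ne_map_eq_of_mapsTo
        (f := fun m : ℕ => (⇑(e ^ ((m:ℤ)+1)) : X → X)) (fun m _ => hmem m) hfin
    -- get p ≥ 1 with f^[p] = id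
    have hpid : ∃ p : ℕ, 1 ≤ p ∧ (⇑f)^[p] = id := by
      rcases Nat.lt_or_ge a b with h | h
      · refine ⟨b - a, by omega, ?_⟩
        rw [← hcoe]
        have hcast : ((b - a : ℕ) : ℤ) = ((b:ℤ)+1) - ((a:ℤ)+1) := by omega
        rw [hcast, zpow_sub, ← Equiv.coe_inj.mp habe, mul_inv_cancel]; rfl
      · have h' : b < a := by omega
        refine ⟨a - b, by omega, ?_⟩
        rw [← hcoe]
        have hcast : ((a - b : ℕ) : ℤ) = ((a:ℤ)+1) - ((b:ℤ)+1) := by omega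
        rw [hcast, zpow_sub, Equiv.coe_inj.mp habe, mul_inv_cancel]; rfl
    obtain ⟨p, hp1, hp⟩ := hpid
    obtain ⟨x⟩ := ‹Nonempty X›
    set O : Set X := (fun i => (⇑f)^[i] x) '' (Set.Iio p) with hO
    have hOfin : O.Finite := (Set.finite_Iio p).image _
    have hOne : O.Nonempty := ⟨x, 0, Set.mem_Iio.mpr (by omega), rfl⟩
    -- X is infinite: get y ∉ O
    have hy' : Oᶜ.Nonempty := by
      by_contra h
      rw [Set.not_nonempty_iff_eq_empty, Set.compl_empty_iff] at h
      have huniv : (Set.univ : Set X).Finite := h ▸ hOfin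
      have h1 : ({x}ᶜ : Set X).Finite := huniv.subset (Set.subset_univ _)
      have h2 : x ∈ closure ({x}ᶜ : Set X) := mem_closure_iff_nhdsWithin_neBot.mpr (hX x)
      rw [h1.isClosed.closure_eq] at h2
      exact h2 rfl
    obtain ⟨y, hy⟩ := hy'
    have hdpos : 0 < infDist y O := (hOfin.isClosed.notMem_iff_infDist_pos hOne).mp hy
    set ε := infDist y O / 2 with hεdef
    have hε : 0 < ε := by positivity
    -- uniform δ over the finitely many iterates
    have hdelta : ∀ m : ℕ, ∃ δ > 0, ∀ i < m, ∀ z : X,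
        dist z x < δ → dist ((⇑f)^[i] z) ((⇑f)^[i] x) < ε := by
      intro m
      induction m with
      | zero => exact ⟨1, one_pos, fun i hi => absurd hi (by omega)⟩
      | succ m ih =>
        obtain ⟨δ₁, hδ₁, h₁⟩ := ih
        have hc : ContinuousAt ((⇑f)^[m]) x := (f.continuous.iterate m).continuousAt
        obtain ⟨δ₂, hδ₂, h₂⟩ := Metric.continuousAt_iff.mp hc ε hε
        refine ⟨min δ₁ δ₂, lt_min hδ₁ hδ₂, ?_⟩
        intro i hi z hz
        rcases Nat.lt_succ_iff_lt_or_eq.mp hi with h | h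
        · exact h₁ i h z (lt_of_lt_of_le hz (min_le_left _ _))
        · subst h; exact h₂ (lt_of_lt_of_le hz (min_le_right _ _))
    obtain ⟨δ, hδ, hδp⟩ := hdelta p
    obtain ⟨n, w, ⟨z, hzU, rfl⟩, hwV⟩ :=
      htrans (ball x δ) (ball y ε) isOpen_ball isOpen_ball
        ⟨x, mem_ball_self hδ⟩ ⟨y, mem_ball_self hε⟩
    have hred : (⇑f)^[n] z = (⇑f)^[n % p] z := by
      conv_lhs => rw [← Nat.div_add_mod n p]
      rw [Function.iterate_add_apply, Function.iterate_mul, hp, Function.iterate_id, id_eq]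
    have him : n % p < p := Nat.mod_lt _ (by omega)
    have h1 : dist ((⇑f)^[n % p] z) ((⇑f)^[n % p] x) < ε :=
      hδp _ him z (mem_ball.mp hzU)
    have h2 : dist ((⇑f)^[n] z) y < ε := mem_ball.mp hwV
    have h3 : infDist y O ≤ dist y ((⇑f)^[n % p] x) :=
      infDist_le_dist_of_mem ⟨n % p, Set.mem_Iio.mpr him, rfl⟩
    have h4 : dist y ((⇑f)^[n % p] x) ≤ dist y ((⇑f)^[n] z) + dist ((⇑f)^[n] z) ((⇑f)^[n % p] x) :=
      dist_triangle _ _ _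
    rw [hred] at h2 h4
    rw [dist_comm] at h2
    linarith
  -- PART B: topological transitivity
  have partB : ∀ U V : Set X, IsOpen U → IsOpen V → U.Nonempty → V.Nonempty →
      ∃ n : ℕ, (nadsComp F n '' U ∩ V).Nonempty := by
    intro U V hU hV hUn hVn
    obtain ⟨n, hn⟩ := htrans U V hU hV hUn hVn
    cases n with
    | zero => exact ⟨0, by rw [show nadsComp F 0 = id from rfl, Set.image_id]; simpa using hn⟩
    | succ m =>
      refine ⟨4*m+1, ?_⟩
      rw [(keyn m).1, hcoe']
      exact hn
  -- PART C: Per = X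
  have partC : {x : X | ∃ m : ℕ, 1 ≤ m ∧ ∀ k : ℕ, nadsComp F (m * k) x = x} = Set.univ := by
    apply Set.eq_univ_iff_forall.mpr
    intro x
    exact ⟨4, by omega, fun k => by rw [hid k]; rfl⟩
  -- dense forward orbit of x₀
  have hdense : Dense (Set.range fun n : ℕ => (⇑f)^[n] x₀) := by
    rw [Metric.dense_iff]
    intro v r hr
    obtain ⟨δ, hδ, hδp⟩ := hx₀ (r/2) (by positivity)
    obtain ⟨n, w, ⟨z, hzU, rfl⟩, hwV⟩ :=
      htrans (ball x₀ δ) (ball v (r/2)) isOpen_ball isOpen_ball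
        ⟨x₀, mem_ball_self hδ⟩ ⟨v, mem_ball_self (by positivity)⟩
    refine ⟨(⇑f)^[n] x₀, ?_, ⟨n, rfl⟩⟩
    have h1 := hδp z (by rw [dist_comm]; exact mem_ball.mp hzU) (n : ℤ)
    rw [hcoe] at h1
    have h2 : dist ((⇑f)^[n] z) v < r/2 := mem_ball.mp hwV
    have h3 : dist ((⇑f)^[n] x₀) v ≤ dist ((⇑f)^[n] x₀) ((⇑f)^[n] z) + dist ((⇑f)^[n] z) v :=
      dist_triangle _ _ _
    rw [mem_ball]
    linarith
  -- shifted orbits are dense too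
  have hdense_shift : ∀ j : ℤ, Dense (Set.range fun n : ℕ => (⇑f)^[n] ((e ^ j) x₀)) := by
    intro j
    have hptw : ∀ (m : ℕ) (w : X), (⇑f)^[m] w = (e ^ (m:ℤ)) w := by
      intro m w; rw [hcoe]
    rcases le_or_gt j 0 with hj | hj
    · apply Dense.mono _ hdense
      rintro - ⟨n, rfl⟩
      refine ⟨n + (-j).toNat, ?_⟩
      simp only [hptw, happ]
      congr 1
      have : ((n + (-j).toNat : ℕ) : ℤ) + j = (n : ℤ) := by
        push_cast [Int.toNat_of_nonneg (by omega : (0:ℤ) ≤ -j)]; ring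
      rw [this]
    · haveI : ∀ x : X, Filter.NeBot (nhdsWithin x {x}ᶜ) := hX
      have hd : Dense ((Set.range fun n : ℕ => (⇑f)^[n] x₀)
          \ ((fun i : ℕ => (⇑f)^[i] x₀) '' (Set.Iio j.toNat))) :=
        hdense.diff_finite ((Set.finite_Iio _).image _)
      apply Dense.mono _ hd
      rintro - ⟨⟨n, rfl⟩, hnot⟩
      have hn : j.toNat ≤ n := by
        by_contra h
        exact hnot ⟨n, Set.mem_Iio.mpr (by omega), rfl⟩
      refine ⟨n - j.toNat, ?_⟩
      simp only [hptw, happ]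
      have hcast : (↑(n - j.toNat) : ℤ) + j = ↑n := by omega
      rw [hcast]
  push_neg at hnotmin
  obtain ⟨z, hz⟩ := hnotmin
  -- invariance of NADS orbits
  have hinvar : ∀ (x : X) (i : ℕ), 1 ≤ i →
      F i '' Set.range (fun n : ℕ => nadsComp F n x) ⊆
        Set.range (fun n : ℕ => nadsComp F n x) := by
    intro x i hi
    rintro - ⟨-, ⟨n, rfl⟩, rfl⟩
    obtain ⟨c, hc⟩ := hFpow i hi
    obtain ⟨a, ha⟩ := hpow n
    obtain ⟨n', hn'⟩ := hsurj (c + a)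
    refine ⟨n', ?_⟩
    simp only [hn', hc, ha, happ]
  -- disjointness of the orbits of x₀ and z
  have hdisj : Set.range (fun n : ℕ => nadsComp F n x₀) ∩
      Set.range (fun n : ℕ => nadsComp F n z) = ∅ := by
    rw [Set.eq_empty_iff_forall_notMem]
    rintro w ⟨⟨n, hn⟩, ⟨m, hm⟩⟩
    obtain ⟨a, ha⟩ := hpow n
    obtain ⟨b, hb⟩ := hpow m
    have hn' : nadsComp F n x₀ = w := hn
    have hm' : nadsComp F m z = w := hm
    rw [ha] at hn'
    rw [hb] at hm'
    have h1 : (e ^ a) x₀ = (e ^ b) z := hn'.trans hm'.symm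
    have h2 : z = (e ^ (-b + a)) x₀ := by
      rw [← happ, h1, happ]
      have : -b + b = 0 := by ring
      rw [this, zpow_zero, Equiv.Perm.one_apply]
    apply hz
    rw [h2]
    exact hdense_shift (-b + a)
  -- PART D
  have partD : ∃ x y : X,
      (∃ m : ℕ, 1 ≤ m ∧ ∀ k : ℕ, nadsComp F (m * k) x = x) ∧
      (∃ m : ℕ, 1 ≤ m ∧ ∀ k : ℕ, nadsComp F (m * k) y = y) ∧
      (∀ i : ℕ, 1 ≤ i → F i '' Set.range (fun n : ℕ => nadsComp F n x) ⊆
        Set.range (fun n : ℕ => nadsComp F n x)) ∧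
      (∀ i : ℕ, 1 ≤ i → F i '' Set.range (fun n : ℕ => nadsComp F n y) ⊆
        Set.range (fun n : ℕ => nadsComp F n y)) ∧
      Set.range (fun n : ℕ => nadsComp F n x) ∩ Set.range (fun n : ℕ => nadsComp F n y) = ∅ :=
    ⟨x₀, z, ⟨4, by omega, fun k => by rw [hid k]; rfl⟩,
      ⟨4, by omega, fun k => by rw [hid k]; rfl⟩,
      hinvar x₀, hinvar z, hdisj⟩
  -- PART E: not sensitive
  have partE : ¬ ∃ ε : ℝ, 0 < ε ∧ ∀ x : X, ∀ δ : ℝ, 0 < δ →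
      ∃ y : X, ∃ n : ℕ, dist x y < δ ∧ ε ≤ dist (nadsComp F n x) (nadsComp F n y) := by
    rintro ⟨ε, hε, hsen⟩
    obtain ⟨δ, hδ, hδp⟩ := hx₀ ε hε
    obtain ⟨y, n, hyd, hsep⟩ := hsen x₀ δ hδ
    obtain ⟨k, hk⟩ := hpow n
    have h1 := hδp y hyd k
    rw [hk] at hsep
    exact absurd h1 (not_lt.mpr hsep)
  exact ⟨partA, partB, partC, partD, partE⟩
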